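/- Let X be a normed space, f : X → ℝ, x₀ ∈ X. Suppose the lower second-order derivative f^{(2)−}(x₀; x) = liminf_{λ↓0} (1/λ²)·(f(x₀+2λx) − 2f(x₀+λx) + f(x₀)) exists uniformly in directions (for every ε > 0 there is δ > 0 with inf_{0<t≤δ} t⁻²(f(x₀+2tx) − 2f(x₀+tx) + f(x₀)) > f^{(2)−}(x₀;x) − ε for all ‖x‖ = 1), that |f(x₀+x) − f(x₀)| ≤ K‖x‖² near x₀, and that there exists α > 0 with f^{(2)−}(x₀; x) ≥ α‖x‖² for all x ∈ X. Then x₀ is a strict local minimum of f: there is δ > 0 and c > 0 with f(x₀+y) − f(x₀) ≥ c‖y‖² for all ‖y‖ ≤ δ. -/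

import Mathlib

theorem stmt14 {X : Type*} [NormedAddCommGroup X] [NormedSpace ℝ X]
    (f : X → ℝ) (x₀ : X) (g : X → ℝ) (K δ₀ α : ℝ)
    (hK : 0 < K) (hδ₀ : 0 < δ₀) (hα : 0 < α)
    (hg : ∀ x : X, (g x : EReal) = Filter.liminf
      (fun lam : ℝ =>
        (((f (x₀ + (2 * lam) • x) - 2 * f (x₀ + lam • x) + f x₀) / lam ^ 2 : ℝ) : EReal))
      (nhdsWithin (0:ℝ) (Set.Ioi 0)))
    (hunif : ∀ ε > (0:ℝ), ∃ δ > (0:ℝ), ∀ x : X, ‖x‖ = 1 →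
      ∀ t : ℝ, 0 < t → t ≤ δ →
        g x - ε < (f (x₀ + (2 * t) • x) - 2 * f (x₀ + t • x) + f x₀) / t ^ 2)
    (hquad : ∀ x : X, ‖x‖ ≤ δ₀ → |f (x₀ + x) - f x₀| ≤ K * ‖x‖ ^ 2)
    (hlower : ∀ x : X, α * ‖x‖ ^ 2 ≤ g x) :
    ∃ δ > (0:ℝ), ∃ c > (0:ℝ), ∀ y : X, ‖y‖ ≤ δ →
      c * ‖y‖ ^ 2 ≤ f (x₀ + y) - f x₀ := by
  obtain ⟨δ, hδ, h⟩ := hunif (α/2) (by linarith)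
  refine ⟨min δ δ₀, lt_min hδ hδ₀, α/4, by linarith, ?_⟩
  intro y hy
  rcases eq_or_ne y 0 with rfl | hy0
  · simp
  set t := ‖y‖ with ht
  have ht0 : 0 < t := norm_pos_iff.mpr hy0
  set x : X := t⁻¹ • y with hx
  have hxn : ‖x‖ = 1 := by
    rw [hx, norm_smul, norm_inv, norm_norm]
    field_simp
  have hyeq : t • x = y := by
    rw [hx, smul_smul, mul_inv_cancel₀ ht0.ne', one_smul]
  have hgα : α ≤ g x := by
    have := hlower x; rwa [hxn, one_pow, mul_one] at this
  have key : ∀ s : ℝ, 0 < s → s ≤ t →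
      (α/2) * s^2 ≤ f (x₀ + (2*s) • x) - 2 * f (x₀ + s • x) + f x₀ := by
    intro s hs hst
    have hsδ : s ≤ δ := le_trans hst (le_trans hy (min_le_left _ _))
    have h1 := h x hxn s hs hsδ
    have h2 : α/2 < (f (x₀ + (2*s) • x) - 2 * f (x₀ + s • x) + f x₀) / s^2 := by
      linarith
    have hs2 : 0 < s^2 := by positivity
    have := (lt_div_iff₀ hs2).mp h2
    linarith
  have ttδ₀ : t ≤ δ₀ := le_trans hy (min_le_right _ _)
  have main : ∀ n : ℕ, (2:ℝ)^n * (f (x₀ + (t/2^n) • x) - f x₀)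
      + (α/4) * t^2 * (1 - (1/2:ℝ)^n) ≤ f (x₀ + y) - f x₀ := by
    intro n
    induction n with
    | zero => simp [hyeq]
    | succ n ih =>
      have h2n : (0:ℝ) < (2:ℝ)^n := by positivity
      have hs : (0:ℝ) < t/2^(n+1) := by positivity
      have hst : t/2^(n+1) ≤ t := by
        apply div_le_self ht0.le
        exact one_le_pow₀ (by norm_num)
      have hk := key (t/2^(n+1)) hs hst
      have h2s : 2 * (t/2^(n+1)) = t/2^n := by
        rw [pow_succ]; field_simp
      rw [h2s] at hk
      have hk' := mul_le_mul_of_nonneg_left hk h2n.le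
      have hid : (2:ℝ)^n * ((α/2) * (t/2^(n+1))^2) = (α/8) * t^2 * (1/2:ℝ)^n := by
        have hne : ((2:ℝ)^(n+1)) ≠ 0 := by positivity
        rw [div_pow, one_div, inv_pow]
        field_simp
        ring
      rw [hid] at hk'
      set A := f (x₀ + (t/2^n) • x)
      set B := f (x₀ + (t/2^(n+1)) • x)
      set F := f x₀
      have expand : (2:ℝ)^(n+1) * (B - F) + (α/4) * t^2 * (1 - (1/2:ℝ)^(n+1))
          = ((2:ℝ)^n * (A - F) + (α/4) * t^2 * (1 - (1/2:ℝ)^n))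
            - ((2:ℝ)^n * (A - 2 * B + F) - (α/8) * t^2 * (1/2:ℝ)^n) := by
        ring
      rw [expand]
      linarith
  have hfin : ∀ n : ℕ, (α/4) * t^2 - ((α/4) + K) * t^2 * (1/2:ℝ)^n
      ≤ f (x₀ + y) - f x₀ := by
    intro n
    have h2n : (0:ℝ) < (2:ℝ)^n := by positivity
    have hnorm : ‖(t/2^n) • x‖ = t/2^n := by
      rw [norm_smul, hxn, mul_one, Real.norm_eq_abs, abs_of_pos (by positivity)]
    have hb := hquad ((t/2^n) • x) (by
      rw [hnorm]
      calc t/2^n ≤ t := by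
            apply div_le_self ht0.le
            exact one_le_pow₀ (by norm_num)
        _ ≤ δ₀ := ttδ₀)
    rw [hnorm] at hb
    have hb' : -(K * (t/2^n)^2) ≤ f (x₀ + (t/2^n) • x) - f x₀ := neg_le_of_abs_le hb
    have hb'' := mul_le_mul_of_nonneg_left hb' h2n.le
    have hid : (2:ℝ)^n * -(K * (t/2^n)^2) = -(K * t^2 * (1/2:ℝ)^n) := by
      rw [div_pow, one_div, inv_pow]
      field_simp
    rw [hid] at hb''
    have := main n
    nlinarith
  have hlim : Filter.Tendsto
      (fun n : ℕ => (α/4) * t^2 - ((α/4) + K) * t^2 * (1/2:ℝ)^n)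
      Filter.atTop (nhds ((α/4) * t^2)) := by
    have hp : Filter.Tendsto (fun n : ℕ => ((1/2:ℝ))^n) Filter.atTop (nhds 0) :=
      tendsto_pow_atTop_nhds_zero_of_lt_one (by norm_num) (by norm_num)
    have := Filter.Tendsto.const_sub ((α/4) * t^2) (hp.const_mul (((α/4) + K) * t^2))
    simpa [mul_assoc] using this
  exact le_of_tendsto' hlim hfin
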